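/- Let ω₀, ω₁ > 0, let n ∈ ℕ, let y_1,…,y_n ∈ {0,1} be binary labels and ŷ_1,…,ŷ_n ∈ (0,1) be predictions. With the weight function w_CE(y, ŷ) = −ω₀(1−y)·log(1−ŷ)/ŷ − ω₁ y·log(ŷ)/(1−ŷ) and the threshold uniformly distributed on [0,1], the sum of the expected weighted false positives and expected weighted false negatives equals the weighted cross entropy loss: Σ_{i=1}^n ∫_0^1 w_CE(y_i, ŷ_i) [ (1−y_i) 𝟙_{ŷ_i > ξ} + y_i 𝟙_{ŷ_i < ξ} ] dξ = −Σ_{i=1}^n [ ω₀ (1−y_i) log(1−ŷ_i) + ω₁ y_i log(ŷ_i) ]. -/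

import Mathlib

open MeasureTheory

lemma int_lt (a c : ℝ) (ha : a ∈ Set.Ioo (0:ℝ) 1) :
    ∫ ξ in (0:ℝ)..1, c * (if ξ < a then (1:ℝ) else 0) = c * a := by
  have : (fun ξ : ℝ => c * (if ξ < a then (1:ℝ) else 0))
      = (Set.Iio a).indicator (fun _ => c) := by
    ext ξ; simp [Set.indicator_apply]
  rw [this, intervalIntegral.integral_of_le (by norm_num),
    MeasureTheory.integral_indicator measurableSet_Iio]
  rw [Measure.restrict_restrict measurableSet_Iio]
  have : Set.Iio a ∩ Set.Ioc 0 1 = Set.Ioo 0 a := by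
    ext x; constructor
    · rintro ⟨h1, h2, h3⟩; exact ⟨h2, h1⟩
    · rintro ⟨h1, h2⟩; exact ⟨h2, h1, le_of_lt (lt_trans h2 ha.2)⟩
  rw [this]
  simp [Real.volume_Ioo, mul_comm, ha.1.le]

lemma int_gt (a c : ℝ) (ha : a ∈ Set.Ioo (0:ℝ) 1) :
    ∫ ξ in (0:ℝ)..1, c * (if a < ξ then (1:ℝ) else 0) = c * (1 - a) := by
  have : (fun ξ : ℝ => c * (if a < ξ then (1:ℝ) else 0))
      = (Set.Ioi a).indicator (fun _ => c) := by
    ext ξ; simp [Set.indicator_apply]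
  rw [this, intervalIntegral.integral_of_le (by norm_num),
    MeasureTheory.integral_indicator measurableSet_Ioi]
  rw [Measure.restrict_restrict measurableSet_Ioi]
  have : Set.Ioi a ∩ Set.Ioc 0 1 = Set.Ioc a 1 := by
    ext x; constructor
    · rintro ⟨h1, _, h3⟩; exact ⟨h1, h3⟩
    · rintro ⟨h1, h2⟩; exact ⟨h1, lt_trans ha.1 h1, h2⟩
  rw [this]
  simp [Real.volume_Ioc, mul_comm, ha.2.le]

theorem stmt9 (ω₀ ω₁ : ℝ) (hω₀ : 0 < ω₀) (hω₁ : 0 < ω₁) (n : ℕ)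
    (y : ℕ → ℝ) (hy : ∀ i ∈ Finset.Icc 1 n, y i = 0 ∨ y i = 1)
    (yh : ℕ → ℝ) (hyh : ∀ i ∈ Finset.Icc 1 n, yh i ∈ Set.Ioo (0 : ℝ) 1) :
    (∑ i ∈ Finset.Icc 1 n,
      ∫ ξ in (0 : ℝ)..1,
        (-ω₀ * (1 - y i) * Real.log (1 - yh i) / yh i
            - ω₁ * y i * Real.log (yh i) / (1 - yh i)) *
          ((1 - y i) * (if ξ < yh i then (1 : ℝ) else 0)
            + y i * (if yh i < ξ then (1 : ℝ) else 0)))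
      = -∑ i ∈ Finset.Icc 1 n,
          (ω₀ * (1 - y i) * Real.log (1 - yh i) + ω₁ * y i * Real.log (yh i)) := by
  rw [← Finset.sum_neg_distrib]
  refine Finset.sum_congr rfl fun i hi => ?_
  obtain ⟨ha0, ha1⟩ := hyh i hi
  have hne0 : yh i ≠ 0 := ne_of_gt ha0
  have hne1 : (1 : ℝ) - yh i ≠ 0 := by linarith
  obtain h | h := hy i hi
  · have he : (fun ξ : ℝ =>
        (-ω₀ * (1 - y i) * Real.log (1 - yh i) / yh i
            - ω₁ * y i * Real.log (yh i) / (1 - yh i)) *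
          ((1 - y i) * (if ξ < yh i then (1 : ℝ) else 0)
            + y i * (if yh i < ξ then (1 : ℝ) else 0)))
        = fun ξ : ℝ => (-ω₀ * Real.log (1 - yh i) / yh i) *
            (if ξ < yh i then (1 : ℝ) else 0) := by
      ext ξ; rw [h]; ring
    rw [he, int_lt _ _ ⟨ha0, ha1⟩, h]
    field_simp
    ring
  · have he : (fun ξ : ℝ =>
        (-ω₀ * (1 - y i) * Real.log (1 - yh i) / yh i
            - ω₁ * y i * Real.log (yh i) / (1 - yh i)) *
          ((1 - y i) * (if ξ < yh i then (1 : ℝ) else 0)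
            + y i * (if yh i < ξ then (1 : ℝ) else 0)))
        = fun ξ : ℝ => (-ω₁ * Real.log (yh i) / (1 - yh i)) *
            (if yh i < ξ then (1 : ℝ) else 0) := by
      ext ξ; rw [h]; ring
    rw [he, int_gt _ _ ⟨ha0, ha1⟩, h]
    field_simp
    ring
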